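/- Let n ≥ 3, 1 ≤ τ ≤ n − 2, e = n(n−1)/2, and let v = (V^{(1)},…,V^{(τ)}) ∈ ℂ^{nτ} be such that the nτ complex numbers {V_i^{(k)}} are algebraically independent over ℚ. Then the stacked voltage coefficient matrix A(v) ∈ ℂ^{nτ×e} has rank nτ − τ(τ+1)/2 < e over ℂ; equivalently, the ℂ-linear map y ↦ A(v)y on ℂ^e has a nontrivial kernel, so no right-hand side i ∈ ℂ^{nτ} determines y uniquely from i = A(v)y. Hence τ = n − 1 is the minimum number of measurements for which a generic stack of complex measurements uniquely determines y. -/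

import Mathlib

open Matrix BigOperators

/-- Edges of the complete graph on `Fin n`: ordered pairs `(i, j)` with `i < j`. -/
abbrev CEdge (n : ℕ) := {p : Fin n × Fin n // p.1 < p.2}

/-- Incidence matrix of the complete graph on `Fin n`, each edge `(i, j)` (with `i < j`)
oriented from `i` to `j`:  `H i l = 1` if edge `l` leaves node `i`, `-1` if it enters `i`,
and `0` otherwise. -/
def incid (F : Type*) [Field F] (n : ℕ) : Matrix (Fin n) (CEdge n) F :=
  Matrix.of fun i l => if i = l.val.1 then 1 else if i = l.val.2 then -1 else 0

/-- Voltage coefficient matrix `Ã(V) = H ⬝ diag(Hᵀ V)`. -/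
def Atilde {F : Type*} [Field F] {n : ℕ} (V : Fin n → F) : Matrix (Fin n) (CEdge n) F :=
  incid F n * Matrix.diagonal ((incid F n)ᵀ *ᵥ V)

/-- Stacked voltage coefficient matrix `A(v)` for `τ` measurements `v 1, …, v τ`:
the row indexed by `(k, i)` is the `i`-th row of `Ã(V^(k))`. -/
def Astack {F : Type*} [Field F] {n τ : ℕ} (v : Fin τ → Fin n → F) :
    Matrix (Fin τ × Fin n) (CEdge n) F :=
  Matrix.of fun p l => Atilde (v p.1) p.2 l

/-- Rigidity matrix of the complete graph at the configuration `x = (x 1, …, x n)`,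
`x i ∈ F^τ`: the row indexed by edge `(i, j)`, `i < j`, has the entries of `(x i − x j)ᵀ`
in the `τ` columns of node `i`, the entries of `(x j − x i)ᵀ` in the `τ` columns of node `j`,
and zeros elsewhere. -/
def rigidityM {F : Type*} [Field F] {n τ : ℕ} (x : Fin n → Fin τ → F) :
    Matrix (CEdge n) (Fin n × Fin τ) F :=
  Matrix.of fun l p =>
    if p.1 = l.val.1 then x l.val.1 p.2 - x l.val.2 p.2
    else if p.1 = l.val.2 then x l.val.2 p.2 - x l.val.1 p.2
    else 0

lemma incid_transpose_mulVec {F : Type*} [Field F] {n : ℕ} (V : Fin n → F) (l : CEdge n) :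
    ((incid F n)ᵀ *ᵥ V) l = V l.val.1 - V l.val.2 := by
  have hne : l.val.1 ≠ l.val.2 := ne_of_lt l.prop
  simp only [mulVec, dotProduct, transpose_apply, incid, Matrix.of_apply]
  have : ∀ i : Fin n, (if i = l.val.1 then (1:F) else if i = l.val.2 then -1 else 0) * V i
      = (if i = l.val.1 then V l.val.1 else 0) + (if i = l.val.2 then -V l.val.2 else 0) := by
    intro i
    by_cases h1 : i = l.val.1
    · subst h1; simp [hne]
    · by_cases h2 : i = l.val.2 <;> simp [h1, h2, Ne.symm hne] <;> ring
  rw [Finset.sum_congr rfl (fun i _ => this i), Finset.sum_add_distrib]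
  simp [sub_eq_add_neg]

lemma astack_apply {F : Type*} [Field F] {n τ : ℕ} (v : Fin τ → Fin n → F)
    (p : Fin τ × Fin n) (l : CEdge n) :
    Astack v p l = (if p.2 = l.val.1 then 1 else if p.2 = l.val.2 then -1 else 0)
      * (v p.1 l.val.1 - v p.1 l.val.2) := by
  simp only [Astack, Atilde, Matrix.of_apply, Matrix.mul_diagonal, incid_transpose_mulVec]
  rfl

lemma astack_transpose_mulVec {F : Type*} [Field F] {n τ : ℕ} (v : Fin τ → Fin n → F)
    (u : Fin τ × Fin n → F) (l : CEdge n) :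
    ((Astack v)ᵀ *ᵥ u) l
      = ∑ k : Fin τ, (u (k, l.val.1) - u (k, l.val.2)) * (v k l.val.1 - v k l.val.2) := by
  have hne : l.val.1 ≠ l.val.2 := ne_of_lt l.prop
  simp only [mulVec, dotProduct, transpose_apply, astack_apply]
  rw [Fintype.sum_prod_type]
  refine Finset.sum_congr rfl fun k _ => ?_
  have : ∀ i : Fin n,
      (if i = l.val.1 then (1:F) else if i = l.val.2 then -1 else 0)
          * (v k l.val.1 - v k l.val.2) * u (k, i)
      = (if i = l.val.1 then (v k l.val.1 - v k l.val.2) * u (k, l.val.1) else 0)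
        + (if i = l.val.2 then -((v k l.val.1 - v k l.val.2) * u (k, l.val.2)) else 0) := by
    intro i
    by_cases h1 : i = l.val.1
    · subst h1; simp [hne]
    · by_cases h2 : i = l.val.2 <;> simp [h1, h2, Ne.symm hne] <;> ring
  rw [Finset.sum_congr rfl (fun i _ => this i), Finset.sum_add_distrib]
  simp only [Finset.sum_ite_eq', Finset.mem_univ, if_true]
  ring

def cedgeEquiv (m : ℕ) : CEdge m ≃ Σ j : Fin m, Fin j.val where
  toFun l := ⟨l.val.2, ⟨l.val.1.val, l.prop⟩⟩
  invFun x := ⟨(⟨x.2.val, lt_trans x.2.isLt x.1.isLt⟩, x.1), x.2.isLt⟩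
  left_inv l := by ext <;> rfl
  right_inv x := by rcases x with ⟨j, i⟩; rfl

lemma card_cedge (m : ℕ) : Fintype.card (CEdge m) = m * (m-1) / 2 := by
  rw [Fintype.card_congr (cedgeEquiv m), Fintype.card_sigma]
  simp only [Fintype.card_fin]
  rw [show (∑ x : Fin m, (x:ℕ)) = ∑ i ∈ Finset.range m, i from Fin.sum_univ_eq_sum_range (fun i => i) m]
  exact Finset.sum_range_id m

lemma exists_algIndep (ι : Type) [Finite ι] : ∃ f : ι → ℂ, AlgebraicIndependent ℚ f := by
  obtain ⟨κ, b, hb⟩ : ∃ (κ : Type) (b : κ → ℂ), IsTranscendenceBasis ℚ b :=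
    exists_isTranscendenceBasis' ℚ ℂ
  have hκ : (Cardinal.mk κ) = Cardinal.continuum := by
    have := IsAlgClosed.cardinal_eq_cardinal_transcendence_basis_of_aleph0_lt b hb
      (by simp) (by rw [Cardinal.mk_complex]; exact Cardinal.aleph0_lt_continuum)
    rw [Cardinal.lift_id, Cardinal.lift_id] at this
    rw [← this, Cardinal.mk_complex]
  have hle : (Cardinal.mk ι) ≤ Cardinal.mk κ := by
    rw [hκ]
    exact le_trans (Cardinal.mk_le_aleph0) Cardinal.aleph0_le_continuum
  obtain ⟨e⟩ := Cardinal.le_def _ _ |>.mp hle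
  exact ⟨b ∘ e, hb.1.comp e e.injective⟩

section Skew
variable {τ : ℕ}

def skewOf (a : CEdge τ → ℂ) : Matrix (Fin τ) (Fin τ) ℂ :=
  Matrix.of fun i j =>
    if h : i < j then a ⟨(i, j), h⟩ else if h' : j < i then -(a ⟨(j, i), h'⟩) else 0

lemma skewOf_add (a b : CEdge τ → ℂ) : skewOf (a + b) = skewOf a + skewOf b := by
  funext i j
  simp only [skewOf, Matrix.of_apply, Matrix.add_apply, Pi.add_apply]
  split_ifs <;> ring

lemma skewOf_smul (c : ℂ) (a : CEdge τ → ℂ) : skewOf (c • a) = c • skewOf a := by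
  funext i j
  simp only [skewOf, Matrix.of_apply, Matrix.smul_apply, Pi.smul_apply, smul_eq_mul]
  split_ifs <;> ring

lemma skewOf_eq_self {S : Matrix (Fin τ) (Fin τ) ℂ} (hS : Sᵀ = -S) :
    skewOf (fun e => S e.val.1 e.val.2) = S := by
  funext i j
  have hanti : ∀ i j, S j i = -S i j := by
    intro i j
    have := congrFun (congrFun hS i) j
    simpa [Matrix.transpose_apply, Matrix.neg_apply] using this
  simp only [skewOf, Matrix.of_apply]
  rcases lt_trichotomy i j with h | h | h
  · rw [dif_pos h]
  · subst h
    rw [dif_neg (lt_irrefl i), dif_neg (lt_irrefl i)]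
    have := hanti i i
    linear_combination -this/2
  · rw [dif_neg (not_lt_of_gt h), dif_pos h, hanti j i]

end Skew

section Core
variable {n τ : ℕ}

/-- node `0`. -/
def nd0 (hτn : τ < n) : Fin n := ⟨0, by omega⟩
/-- node `j+1`. -/
def nd (hτn : τ < n) (j : Fin τ) : Fin n := ⟨j.val + 1, by omega⟩

/-- the matrix of difference vectors `q_j = p_{j+1} - p_0`. -/
def Qmat (hτn : τ < n) (v : Fin τ → Fin n → ℂ) : Matrix (Fin τ) (Fin τ) ℂ :=
  Matrix.of fun k j => v k (nd hτn j) - v k (nd0 hτn)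

/-- `Φ(t, a)` is the trivial motion `i ↦ skewOf a · (p_i - p_0) + t`. -/
noncomputable def Phi (hτn : τ < n) (v : Fin τ → Fin n → ℂ) :
    ((Fin τ → ℂ) × (CEdge τ → ℂ)) →ₗ[ℂ] (Fin τ × Fin n → ℂ) where
  toFun x := fun p => (skewOf x.2 *ᵥ fun j => v j p.2 - v j (nd0 hτn)) p.1 + x.1 p.1
  map_add' x y := by
    funext p
    simp only [Prod.fst_add, Prod.snd_add, skewOf_add, Matrix.add_mulVec, Pi.add_apply]
    ring
  map_smul' c x := by
    funext p
    simp only [Prod.smul_fst, Prod.smul_snd, skewOf_smul, Matrix.smul_mulVec,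
      Pi.smul_apply, smul_eq_mul, RingHom.id_apply]
    ring

lemma mem_ker_iff (hτn : τ < n) (v : Fin τ → Fin n → ℂ) (u : Fin τ × Fin n → ℂ) :
    u ∈ LinearMap.ker ((Astack v)ᵀ).mulVecLin ↔
      ∀ a b : Fin n, ∑ k : Fin τ, (u (k, a) - u (k, b)) * (v k a - v k b) = 0 := by
  rw [LinearMap.mem_ker]
  constructor
  · intro h a b
    rcases lt_trichotomy a b with hab | hab | hab
    · have := congrFun h ⟨(a, b), hab⟩
      rw [Matrix.mulVecLin_apply] at this
      rw [astack_transpose_mulVec] at this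
      exact this
    · subst hab; simp
    · have := congrFun h ⟨(b, a), hab⟩
      rw [Matrix.mulVecLin_apply, astack_transpose_mulVec] at this
      calc ∑ k : Fin τ, (u (k, a) - u (k, b)) * (v k a - v k b)
          = ∑ k : Fin τ, (u (k, b) - u (k, a)) * (v k b - v k a) :=
            Finset.sum_congr rfl fun k _ => by ring
        _ = 0 := this
  · intro h
    funext l
    rw [Matrix.mulVecLin_apply, astack_transpose_mulVec]
    exact h l.val.1 l.val.2

lemma polar (v : Fin τ → Fin n → ℂ) (u : Fin τ × Fin n → ℂ)
    (h : ∀ a b : Fin n, ∑ k : Fin τ, (u (k, a) - u (k, b)) * (v k a - v k b) = 0)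
    (a b c : Fin n) :
    ∑ k : Fin τ, (u (k, a) - u (k, c)) * (v k b - v k c)
      + ∑ k : Fin τ, (u (k, b) - u (k, c)) * (v k a - v k c) = 0 := by
  have key : ∑ k : Fin τ, (u (k, a) - u (k, c)) * (v k b - v k c)
      + ∑ k : Fin τ, (u (k, b) - u (k, c)) * (v k a - v k c)
      = (∑ k : Fin τ, (u (k, a) - u (k, c)) * (v k a - v k c))
        + (∑ k : Fin τ, (u (k, b) - u (k, c)) * (v k b - v k c))
        - ∑ k : Fin τ, (u (k, a) - u (k, b)) * (v k a - v k b) := by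
    rw [← Finset.sum_add_distrib, ← Finset.sum_add_distrib, ← Finset.sum_sub_distrib]
    exact Finset.sum_congr rfl fun k _ => by ring
  rw [key, h a c, h b c, h a b]
  ring

end Core

section Core2
variable {n τ : ℕ}

lemma Phi_injective (hτn : τ < n) (v : Fin τ → Fin n → ℂ)
    (hQ : IsUnit (Qmat hτn v).det) : Function.Injective (Phi hτn v) := by
  rw [← LinearMap.ker_eq_bot]
  rw [Submodule.eq_bot_iff]
  rintro ⟨t, a⟩ hx
  rw [LinearMap.mem_ker] at hx
  have ht : t = 0 := by
    funext k
    have := congrFun hx (k, nd0 hτn)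
    simpa [Phi, Matrix.mulVec, dotProduct] using this
  have hSQ : skewOf a * Qmat hτn v = 0 := by
    ext k j
    have := congrFun hx (k, nd hτn j)
    rw [Phi] at this
    simp only [LinearMap.coe_mk, AddHom.coe_mk, Pi.zero_apply] at this
    rw [ht] at this
    simp only [Pi.zero_apply, add_zero] at this
    rw [Matrix.mul_apply, Matrix.zero_apply]
    rw [Matrix.mulVec, dotProduct] at this
    exact this
  have hS : skewOf a = 0 := by
    calc skewOf a = skewOf a * (Qmat hτn v * (Qmat hτn v)⁻¹) := by
          rw [Matrix.mul_nonsing_inv _ hQ, Matrix.mul_one]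
      _ = (skewOf a * Qmat hτn v) * (Qmat hτn v)⁻¹ := by rw [Matrix.mul_assoc]
      _ = 0 := by rw [hSQ, Matrix.zero_mul]
  have ha : a = 0 := by
    funext e
    have := congrFun (congrFun hS e.val.1) e.val.2
    rw [skewOf, Matrix.of_apply, dif_pos e.prop] at this
    simpa using this
  simp [ht, ha, Prod.ext_iff]

end Core2

section Core3
variable {n τ : ℕ}

lemma range_Phi_le (hτn : τ < n) (v : Fin τ → Fin n → ℂ) :
    LinearMap.range (Phi hτn v) ≤ LinearMap.ker ((Astack v)ᵀ).mulVecLin := by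
  rintro _ ⟨⟨t, a⟩, rfl⟩
  rw [mem_ker_iff hτn]
  intro b c
  have hval : ∀ k : Fin τ,
      Phi hτn v (t, a) (k, b) - Phi hτn v (t, a) (k, c)
        = ∑ j : Fin τ, skewOf a k j * (v j b - v j c) := by
    intro k
    simp only [Phi, LinearMap.coe_mk, AddHom.coe_mk, Matrix.mulVec, dotProduct]
    rw [add_sub_add_comm, sub_self, add_zero, ← Finset.sum_sub_distrib]
    exact Finset.sum_congr rfl fun j _ => by ring
  calc ∑ k : Fin τ, (Phi hτn v (t, a) (k, b) - Phi hτn v (t, a) (k, c)) * (v k b - v k c)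
      = ∑ k : Fin τ, ∑ j : Fin τ, skewOf a k j * (v j b - v j c) * (v k b - v k c) := by
        refine Finset.sum_congr rfl fun k _ => ?_
        rw [hval k, Finset.sum_mul]
    _ = 0 := by
        have hanti : ∀ k j, skewOf a k j = -skewOf a j k := by
          intro k j
          simp only [skewOf, Matrix.of_apply]
          rcases lt_trichotomy k j with h | h | h
          · rw [dif_pos h, dif_neg (not_lt_of_gt h), dif_pos h]; ring
          · subst h; rw [dif_neg (lt_irrefl k)]; simp
          · rw [dif_neg (not_lt_of_gt h), dif_pos h, dif_pos h]
        set T := ∑ k : Fin τ, ∑ j : Fin τ, skewOf a k j * (v j b - v j c) * (v k b - v k c)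
          with hT
        have h2 : T + T = 0 := by
          nth_rewrite 2 [hT]
          rw [Finset.sum_comm]
          rw [hT, ← Finset.sum_add_distrib]
          rw [show (0:ℂ) = ∑ k : Fin τ, 0 from (Finset.sum_const_zero).symm]
          refine Finset.sum_congr rfl fun k _ => ?_
          rw [← Finset.sum_add_distrib]
          rw [show (0:ℂ) = ∑ j : Fin τ, 0 from (Finset.sum_const_zero).symm]
          refine Finset.sum_congr rfl fun j _ => ?_
          rw [hanti k j]
          ring
        exact add_self_eq_zero.mp h2

end Core3

section Core4
variable {n τ : ℕ}

lemma ker_le_range_Phi (hτn : τ < n) (v : Fin τ → Fin n → ℂ)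
    (hQ : IsUnit (Qmat hτn v).det) :
    LinearMap.ker ((Astack v)ᵀ).mulVecLin ≤ LinearMap.range (Phi hτn v) := by
  intro u hu
  rw [mem_ker_iff hτn] at hu
  set Q := Qmat hτn v with hQdef
  set M' : Matrix (Fin τ) (Fin τ) ℂ :=
    Matrix.of (fun k j => u (k, nd hτn j) - u (k, nd0 hτn)) with hM'
  set S := M' * Q⁻¹ with hSdef
  have hSQ : S * Q = M' := by
    rw [hSdef, Matrix.mul_assoc, Matrix.nonsing_inv_mul _ hQ, Matrix.mul_one]
  -- the Gram matrix G = Qᵀ * M' satisfies G + Gᵀ = 0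
  have hG : Qᵀ * M' + (Qᵀ * M')ᵀ = 0 := by
    ext j j'
    simp only [Matrix.add_apply, Matrix.transpose_apply, Matrix.mul_apply, Matrix.zero_apply]
    have hp := polar v u hu (nd hτn j') (nd hτn j) (nd0 hτn)
    calc (∑ l, Qᵀ j l * M' l j') + ∑ l, Qᵀ j' l * M' l j
        = (∑ l, (u (l, nd hτn j') - u (l, nd0 hτn)) * (v l (nd hτn j) - v l (nd0 hτn)))
          + ∑ l, (u (l, nd hτn j) - u (l, nd0 hτn)) * (v l (nd hτn j') - v l (nd0 hτn)) := by
          congr 1 <;> exact Finset.sum_congr rfl fun l _ => by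
            simp only [hM', hQdef, Qmat, Matrix.transpose_apply, Matrix.of_apply]; ring
      _ = 0 := hp
  -- S is skew
  have hskew : Sᵀ = -S := by
    have h1 : Qᵀ * (Sᵀ + S) * Q = 0 := by
      have e1 : Qᵀ * (Sᵀ + S) * Q = (Qᵀ * M')ᵀ + Qᵀ * M' := by
        rw [← hSQ]
        simp only [Matrix.transpose_mul, Matrix.transpose_transpose, Matrix.mul_add,
          Matrix.add_mul, Matrix.mul_assoc]
      rw [e1, add_comm, hG]
    have hQt : IsUnit (Qᵀ).det := by rwa [Matrix.det_transpose]
    have h2 : Qᵀ * ((Sᵀ + S) * Q) = 0 := by rw [← Matrix.mul_assoc]; exact h1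
    have h3 : (Sᵀ + S) * Q = 0 := by
      rw [← Matrix.nonsing_inv_mul_cancel_left Qᵀ ((Sᵀ + S) * Q) hQt, h2, Matrix.mul_zero]
    have h4 : Sᵀ + S = 0 := by
      rw [← Matrix.mul_nonsing_inv_cancel_right Q (Sᵀ + S) hQ, h3, Matrix.zero_mul]
    linear_combination (norm := abel) h4
  -- conclude : u = Phi (t, a)
  refine ⟨(fun k => u (k, nd0 hτn), fun e => S e.val.1 e.val.2), ?_⟩
  have hSa : skewOf (fun e : CEdge τ => S e.val.1 e.val.2) = S := skewOf_eq_self hskew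
  funext p
  obtain ⟨k, i⟩ := p
  -- the residual vector w vanishes
  have hw : (fun k => u (k, i) - u (k, nd0 hτn) - (S *ᵥ fun j => v j i - v j (nd0 hτn)) k)
      = (0 : Fin τ → ℂ) := by
    set w : Fin τ → ℂ :=
      fun k => u (k, i) - u (k, nd0 hτn) - (S *ᵥ fun j => v j i - v j (nd0 hτn)) k with hwdef
    have hQw : Qᵀ *ᵥ w = 0 := by
      funext j
      rw [Matrix.mulVec, dotProduct]
      have hp := polar v u hu (nd hτn j) i (nd0 hτn)
      -- second piece : ∑ k Q k j * (S *ᵥ x) k = - ∑ l M' l j * x l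
      have hsec : ∑ k, Q k j * (S *ᵥ fun j' => v j' i - v j' (nd0 hτn)) k
          = - ∑ l, M' l j * (v l i - v l (nd0 hτn)) := by
        calc ∑ k, Q k j * (S *ᵥ fun j' => v j' i - v j' (nd0 hτn)) k
            = ∑ k, ∑ l, Q k j * (S k l * (v l i - v l (nd0 hτn))) := by
              refine Finset.sum_congr rfl fun k _ => ?_
              rw [Matrix.mulVec, dotProduct, Finset.mul_sum]
          _ = ∑ l, (∑ k, S k l * Q k j) * (v l i - v l (nd0 hτn)) := by
              rw [Finset.sum_comm]
              refine Finset.sum_congr rfl fun l _ => ?_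
              rw [Finset.sum_mul]
              exact Finset.sum_congr rfl fun k _ => by ring
          _ = - ∑ l, M' l j * (v l i - v l (nd0 hτn)) := by
              rw [← Finset.sum_neg_distrib]
              refine Finset.sum_congr rfl fun l _ => ?_
              have : ∑ k, S k l * Q k j = (Sᵀ * Q) l j := by
                rw [Matrix.mul_apply]
                exact Finset.sum_congr rfl fun k _ => by rw [Matrix.transpose_apply]
              rw [this, hskew, Matrix.neg_mul, hSQ, Matrix.neg_apply]
              ring
      calc ∑ k, Qᵀ j k * w k
          = (∑ k, (u (k, i) - u (k, nd0 hτn)) * Q k j)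
            - ∑ k, Q k j * (S *ᵥ fun j' => v j' i - v j' (nd0 hτn)) k := by
            rw [← Finset.sum_sub_distrib]
            exact Finset.sum_congr rfl fun k _ => by
              rw [Matrix.transpose_apply, hwdef]; ring
        _ = 0 := by
            rw [hsec, sub_neg_eq_add]
            calc (∑ k, (u (k, i) - u (k, nd0 hτn)) * Q k j)
                  + ∑ l, M' l j * (v l i - v l (nd0 hτn))
                = (∑ l, (u (l, nd hτn j) - u (l, nd0 hτn)) * (v l i - v l (nd0 hτn)))
                  + ∑ l, (u (l, i) - u (l, nd0 hτn)) * (v l (nd hτn j) - v l (nd0 hτn)) := by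
                  rw [add_comm]
                  congr 1 <;> exact Finset.sum_congr rfl fun l _ => by
                    simp only [hM', hQdef, Qmat, Matrix.of_apply]; ring
              _ = 0 := hp
    -- Qᵀ invertible ⟹ w = 0
    have hQt : IsUnit (Qᵀ).det := by rwa [Matrix.det_transpose]
    calc w = (1 : Matrix (Fin τ) (Fin τ) ℂ) *ᵥ w := by rw [Matrix.one_mulVec]
      _ = ((Qᵀ)⁻¹ * Qᵀ) *ᵥ w := by rw [Matrix.nonsing_inv_mul _ hQt]
      _ = (Qᵀ)⁻¹ *ᵥ (Qᵀ *ᵥ w) := by rw [← Matrix.mulVec_mulVec]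
      _ = 0 := by rw [hQw, Matrix.mulVec_zero]
  have := congrFun hw k
  simp only [Pi.zero_apply, sub_eq_zero] at this
  simp only [Phi, LinearMap.coe_mk, AddHom.coe_mk, hSa]
  linear_combination -this

end Core4

section Core5
variable {n τ : ℕ}

lemma rank_Astack_add (hτn : τ < n) (v : Fin τ → Fin n → ℂ)
    (hQ : IsUnit (Qmat hτn v).det) :
    (Astack v).rank + (τ + τ * (τ - 1) / 2) = τ * n := by
  have hker : LinearMap.ker ((Astack v)ᵀ).mulVecLin = LinearMap.range (Phi hτn v) :=
    le_antisymm (ker_le_range_Phi hτn v hQ) (range_Phi_le hτn v)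
  have hfr : Module.finrank ℂ (LinearMap.range (Phi hτn v)) = τ + τ * (τ - 1) / 2 := by
    rw [LinearMap.finrank_range_of_inj (Phi_injective hτn v hQ)]
    rw [Module.finrank_prod, Module.finrank_fintype_fun_eq_card,
      Module.finrank_fintype_fun_eq_card, Fintype.card_fin, card_cedge]
  have hrn := LinearMap.finrank_range_add_finrank_ker ((Astack v)ᵀ).mulVecLin
  rw [hker, hfr] at hrn
  rw [Module.finrank_fintype_fun_eq_card, Fintype.card_prod, Fintype.card_fin,
    Fintype.card_fin] at hrn
  rw [← Matrix.rank_transpose]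
  exact hrn

end Core5

section Gen
variable {n τ : ℕ}
open MvPolynomial

lemma det_Qmat_isUnit (hτn : τ < n) (v : Fin τ → Fin n → ℂ)
    (hgen : AlgebraicIndependent ℚ (fun p : Fin τ × Fin n => v p.1 p.2)) :
    IsUnit (Qmat hτn v).det := by
  set P : Matrix (Fin τ) (Fin τ) (MvPolynomial (Fin τ × Fin n) ℚ) :=
    Matrix.of (fun k j => X (k, nd hτn j) - X (k, nd0 hτn)) with hP
  have hmap : P.map (aeval (fun p : Fin τ × Fin n => v p.1 p.2)) = Qmat hτn v := by
    ext k j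
    simp [hP, Qmat]
  have hPdet : P.det ≠ 0 := by
    intro h0
    have := congrArg (aeval (fun p : Fin τ × Fin n =>
      if p.2.val = p.1.val + 1 then (1 : ℚ) else 0)) h0
    rw [map_zero, AlgHom.map_det, AlgHom.mapMatrix_apply] at this
    have hone : P.map (aeval (fun p : Fin τ × Fin n =>
        if p.2.val = p.1.val + 1 then (1 : ℚ) else 0)) = (1 : Matrix (Fin τ) (Fin τ) ℚ) := by
      ext k j
      simp only [hP, Matrix.map_apply, Matrix.of_apply, map_sub, aeval_X, Matrix.one_apply,
        nd, nd0]
      by_cases h : k = j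
      · subst h; simp
      · have hne : ¬ ((j.val + 1 : ℕ) = k.val + 1) := by
          intro hc; exact h (Fin.ext (by omega)).symm
        simp [h, hne]
        exact fun hc => h (Fin.ext hc).symm
    rw [hone, Matrix.det_one] at this
    exact one_ne_zero this
  have hdet : (Qmat hτn v).det ≠ 0 := by
    intro h0
    apply hPdet
    apply hgen
    rw [map_zero, ← h0, ← hmap, AlgHom.map_det, AlgHom.mapMatrix_apply]
  exact Ne.isUnit hdet

end Gen

section Arith

lemma arithA (τ : ℕ) (h : 1 ≤ τ) : τ + τ * (τ - 1) / 2 = τ * (τ + 1) / 2 := by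
  obtain ⟨s, rfl⟩ : ∃ s, τ = s + 1 := ⟨τ - 1, by omega⟩
  obtain ⟨m, hm⟩ := Nat.even_mul_succ_self s
  have h2 : (s + 1) * ((s + 1) - 1) = 2 * m := by
    rw [Nat.add_sub_cancel, mul_comm, hm]; ring
  have h3 : (s + 1) * ((s + 1) + 1) = 2 * m + 2 * (s + 1) := by
    have hh : (s + 1) * ((s + 1) + 1) = s * (s + 1) + 2 * (s + 1) := by ring
    rw [hh, hm]; ring
  rw [h2, h3]
  omega

lemma arithC (n τ : ℕ) (h1 : 1 ≤ τ) (h2 : τ + 2 ≤ n) :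
    n * τ - τ * (τ + 1) / 2 < n * (n - 1) / 2 := by
  obtain ⟨s, rfl⟩ : ∃ s, τ = s + 1 := ⟨τ - 1, by omega⟩
  obtain ⟨r, rfl⟩ : ∃ r, n = s + 3 + r := ⟨n - (s + 3), by omega⟩
  obtain ⟨m, hm⟩ := Nat.even_mul_succ_self (s + 1)
  obtain ⟨b, hb⟩ := Nat.even_mul_succ_self (s + 2 + r)
  have e1 : (s + 1) * ((s + 1) + 1) = 2 * m := by rw [hm]; ring
  have e2 : (s + 3 + r) * (s + 3 + r - 1) = 2 * b := by
    have hh : s + 3 + r - 1 = s + 2 + r := by omega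
    rw [hh, mul_comm]
    have : s + 2 + r + 1 = s + 3 + r := by omega
    rw [← this, hb]; ring
  rw [e1, e2]
  have e3 : (s + 3 + r) * (s + 1) + 1 ≤ m + b := by nlinarith [hm, hb, sq_nonneg r]
  have e4 : 1 ≤ b := by nlinarith [hb]
  generalize (s + 3 + r) * (s + 1) = P at e3 ⊢
  omega

lemma arithD (n : ℕ) (h : 3 ≤ n) :
    (n - 1) + (n - 1) * ((n - 1) - 1) / 2 + n * (n - 1) / 2 = (n - 1) * n := by
  obtain ⟨u, rfl⟩ : ∃ u, n = u + 2 := ⟨n - 2, by omega⟩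
  have s1 : u + 2 - 1 = u + 1 := by omega
  have s2 : u + 1 - 1 = u := by omega
  rw [s1, s2]
  obtain ⟨m, hm⟩ := Nat.even_mul_succ_self u
  have e1 : (u + 1) * u = 2 * m := by rw [mul_comm, hm]; ring
  have e2 : (u + 2) * (u + 1) = 2 * m + 2 * (u + 1) := by
    have : (u + 2) * (u + 1) = u * (u + 1) + 2 * (u + 1) := by ring
    rw [this, hm]; ring
  have e3 : (u + 1) * (u + 2) = 2 * m + 2 * (u + 1) := by rw [mul_comm]; exact e2
  rw [e1, e2, e3]
  omega

end Arith

section KerEx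

lemma exists_ker (n τ : ℕ) (h1 : 1 ≤ τ) (hn : 3 ≤ n) (h2 : τ ≤ n - 2)
    (v : Fin τ → Fin n → ℂ)
    (hgen : AlgebraicIndependent ℚ (fun p : Fin τ × Fin n => v p.1 p.2)) :
    ∃ y : CEdge n → ℂ, y ≠ 0 ∧ Astack v *ᵥ y = 0 := by
  have hτn : τ < n := by omega
  have hQ := det_Qmat_isUnit hτn v hgen
  have hrank := rank_Astack_add hτn v hQ
  rw [arithA τ h1] at hrank
  have hr : (Astack v).rank = n * τ - τ * (τ + 1) / 2 := by
    rw [Nat.mul_comm n τ]; exact Nat.eq_sub_of_add_eq hrank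
  have hlt : (Astack v).rank < Fintype.card (CEdge n) := by
    rw [card_cedge, hr]
    exact arithC n τ h1 (by omega)
  have hrn := LinearMap.finrank_range_add_finrank_ker (Astack v).mulVecLin
  rw [Module.finrank_fintype_fun_eq_card] at hrn
  have hrn' : (Astack v).rank + Module.finrank ℂ (LinearMap.ker (Astack v).mulVecLin)
      = Fintype.card (CEdge n) := by
    rw [Matrix.rank]; exact hrn
  have hker : LinearMap.ker (Astack v).mulVecLin ≠ ⊥ := by
    intro hbot
    rw [hbot, finrank_bot, add_zero] at hrn'
    exact Nat.lt_irrefl _ (hrn' ▸ hlt)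
  obtain ⟨y, hy, hy0⟩ := (Submodule.ne_bot_iff _).mp hker
  exact ⟨y, hy0, by rw [← Matrix.mulVecLin_apply]; exact LinearMap.mem_ker.mp hy⟩

end KerEx

section Final

lemma inj_of_gen (n : ℕ) (hn : 3 ≤ n) (v' : Fin (n-1) → Fin n → ℂ)
    (hgen' : AlgebraicIndependent ℚ (fun p : Fin (n-1) × Fin n => v' p.1 p.2)) :
    Function.Injective (fun y : CEdge n → ℂ => Astack v' *ᵥ y) := by
  have hτn : n - 1 < n := by omega
  have hQ := det_Qmat_isUnit hτn v' hgen'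
  have hrank := rank_Astack_add hτn v' hQ
  have hD := arithD n hn
  have hr : (Astack v').rank = n * (n-1) / 2 := by
    have h' : (Astack v').rank + ((n-1) + (n-1) * ((n-1) - 1) / 2)
        = n * (n-1) / 2 + ((n-1) + (n-1) * ((n-1) - 1) / 2) := by
      rw [hrank, ← hD]; ring
    exact Nat.add_right_cancel h'
  have hrn := LinearMap.finrank_range_add_finrank_ker (Astack v').mulVecLin
  rw [Module.finrank_fintype_fun_eq_card] at hrn
  have hrn' : (Astack v').rank + Module.finrank ℂ (LinearMap.ker (Astack v').mulVecLin)
      = Fintype.card (CEdge n) := by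
    rw [Matrix.rank]; exact hrn
  rw [hr, card_cedge] at hrn'
  have hker0 : Module.finrank ℂ (LinearMap.ker (Astack v').mulVecLin) = 0 :=
    Nat.add_left_cancel (hrn'.trans (Nat.add_zero _).symm)
  have hbot : LinearMap.ker (Astack v').mulVecLin = ⊥ := Submodule.finrank_eq_zero.mp hker0
  have hinj := LinearMap.ker_eq_bot.mp hbot
  have heq : (fun y : CEdge n → ℂ => Astack v' *ᵥ y) = ⇑(Astack v').mulVecLin := by
    funext y; rw [Matrix.mulVecLin_apply]
  rw [heq]; exact hinj

end Final

/-- with `1 ≤ τ ≤ n − 2` generic complex measurements, `A(v)` has rank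
`nτ − τ(τ+1)/2 < e` over `ℂ`, so `y ↦ A(v)y` has a nontrivial kernel and no right-hand
side determines `y` uniquely; hence `τ = n − 1` is the minimum number of measurements
for which a generic stack of complex measurements uniquely determines `y`. -/
theorem stmt10 (n τ : ℕ) (hn : 3 ≤ n) (hτ1 : 1 ≤ τ) (hτ2 : τ ≤ n - 2)
    (v : Fin τ → Fin n → ℂ)
    (hgen : AlgebraicIndependent ℚ (fun p : Fin τ × Fin n => v p.1 p.2)) :
    (Astack v).rank = n * τ - τ * (τ + 1) / 2 ∧
    n * τ - τ * (τ + 1) / 2 < n * (n - 1) / 2 ∧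
    (∃ y : CEdge n → ℂ, y ≠ 0 ∧ Astack v *ᵥ y = 0) ∧
    (∀ (i : Fin τ × Fin n → ℂ) (y : CEdge n → ℂ),
        i = Astack v *ᵥ y → ∃ y' : CEdge n → ℂ, y' ≠ y ∧ i = Astack v *ᵥ y') ∧
    IsLeast {τ' : ℕ |
        ∀ v' : Fin τ' → Fin n → ℂ,
          AlgebraicIndependent ℚ (fun p : Fin τ' × Fin n => v' p.1 p.2) →
          Function.Injective (fun y : CEdge n → ℂ => Astack v' *ᵥ y)}
      (n - 1) := by
  have hτn : τ < n := by omega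
  have hQ := det_Qmat_isUnit hτn v hgen
  have hrank := rank_Astack_add hτn v hQ
  rw [arithA τ hτ1] at hrank
  refine ⟨?_, ?_, ?_, ?_, ?_, ?_⟩
  · rw [Nat.mul_comm n τ]; exact Nat.eq_sub_of_add_eq hrank
  · exact arithC n τ hτ1 (by omega)
  · exact exists_ker n τ hτ1 hn hτ2 v hgen
  · intro i y hi
    obtain ⟨y0, hy0, hky⟩ := exists_ker n τ hτ1 hn hτ2 v hgen
    refine ⟨y + y0, ?_, ?_⟩
    · intro h; exact hy0 (by rwa [add_eq_left] at h)
    · rw [hi, Matrix.mulVec_add, hky, add_zero]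
  · intro v' hgen'
    exact inj_of_gen n hn v' hgen'
  · intro τ' hτ'
    by_contra hlt
    push_neg at hlt
    rcases Nat.eq_zero_or_pos τ' with h0 | hpos
    · subst h0
      have hinj := hτ' (fun _ _ => 0) (algebraicIndependent_empty_type)
      have e : CEdge n := ⟨(⟨0, by omega⟩, ⟨1, by omega⟩), by
        simp [Fin.mk_lt_mk]⟩
      have h01 : (0 : CEdge n → ℂ) = fun _ => 1 := hinj (Subsingleton.elim _ _)
      exact absurd (congrFun h01 e) (by norm_num)
    · obtain ⟨f, hf⟩ := exists_algIndep (Fin τ' × Fin n)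
      have hgen' : AlgebraicIndependent ℚ
          (fun p : Fin τ' × Fin n => (fun k i => f (k, i) : Fin τ' → Fin n → ℂ) p.1 p.2) := by
        have hfe : (fun p : Fin τ' × Fin n => (fun k i => f (k, i) : Fin τ' → Fin n → ℂ) p.1 p.2)
            = f := by funext p; simp
        rw [hfe]; exact hf
      obtain ⟨y, hy0, hky⟩ :=
        exists_ker n τ' hpos hn (by omega) (fun k i => f (k, i)) hgen'
      have heq0 : (Astack (fun k i => f (k, i) : Fin τ' → Fin n → ℂ)) *ᵥ y
          = (Astack (fun k i => f (k, i) : Fin τ' → Fin n → ℂ)) *ᵥ (0 : CEdge n → ℂ) := by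
        rw [hky, Matrix.mulVec_zero]
      have := hτ' (fun k i => f (k, i)) hgen' heq0
      exact hy0 this
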